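/- The complex Δ = (L_1 * L_3) ∪ (L_2 * L_3) ∪ (L_1 * L_4), where L_1, L_2, L_3, L_4 are four cycles of length ≥ 4 on pairwise disjoint vertex sets, is a flag weak 3-pseudomanifold; moreover there exist an edge τ_1 of L_1 and an edge τ_2 of L_3 with V(lk_Δ τ_1) ∪ V(lk_Δ τ_2) = V(Δ), yet Δ is a proper subcomplex of lk_Δ τ_1 * lk_Δ τ_2. -/

import Mathlib

open Finset

/-- An abstract simplicial complex on vertex type `V`, given by a finite,
downward-closed family of finite faces containing the empty face. -/
structure SC (V : Type*) [DecidableEq V] where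
  faces : Finset (Finset V)
  empty_mem : ∅ ∈ faces
  down_closed : ∀ ⦃σ τ : Finset V⦄, σ ∈ faces → τ ⊆ σ → τ ∈ faces

namespace SC

variable {V : Type*} [DecidableEq V]

/-- The vertex set of a complex. -/
def vertexSet (Δ : SC V) : Finset V := Δ.faces.sup id

/-- `fNum Δ i` is the number of `i`-dimensional faces (faces of cardinality `i+1`). -/
def fNum (Δ : SC V) (i : ℕ) : ℕ := (Δ.faces.filter fun σ => σ.card = i + 1).card

/-- A complex is flag if it is the clique complex of its graph, i.e. every set of
vertices which is pairwise joined by edges is a face (equivalently, all minimal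
non-faces have cardinality two). -/
def IsFlag (Δ : SC V) : Prop :=
  ∀ σ : Finset V, (∀ u ∈ σ, ∀ v ∈ σ, ({u, v} : Finset V) ∈ Δ.faces) → σ ∈ Δ.faces

/-- The restriction `Δ[W]` of `Δ` to a set `W` of vertices. -/
def restrict (Δ : SC V) (W : Finset V) : SC V where
  faces := Δ.faces.filter fun σ => σ ⊆ W
  empty_mem := by simp [Δ.empty_mem]
  down_closed := by
    intro σ τ hσ hτ
    simp only [mem_filter] at hσ ⊢
    exact ⟨Δ.down_closed hσ.1 hτ, hτ.trans hσ.2⟩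

/-- The link of a face `σ` in `Δ`. -/
def link (Δ : SC V) (σ : Finset V) : SC V where
  faces := insert ∅ (Δ.faces.filter fun τ => Disjoint τ σ ∧ τ ∪ σ ∈ Δ.faces)
  empty_mem := mem_insert_self _ _
  down_closed := by
    intro τ ρ hτ hρ
    rcases mem_insert.1 hτ with h | h
    · subst h
      simp [Finset.subset_empty.1 hρ]
    · simp only [mem_filter] at h
      refine mem_insert.2 (Or.inr ?_)
      simp only [mem_filter]
      exact ⟨Δ.down_closed h.1 hρ, h.2.1.mono_left hρ,
        Δ.down_closed h.2.2 (Finset.union_subset_union hρ Finset.Subset.rfl)⟩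

/-- A facet is a maximal face. -/
def IsFacet (Δ : SC V) (σ : Finset V) : Prop :=
  σ ∈ Δ.faces ∧ ∀ τ ∈ Δ.faces, σ ⊆ τ → σ = τ

/-- `Δ` is pure of dimension `D`: all faces have dimension at most `D` and all
facets have dimension exactly `D`. -/
def Pure (Δ : SC V) (D : ℕ) : Prop :=
  (∀ σ ∈ Δ.faces, σ.card ≤ D + 1) ∧ (∃ σ ∈ Δ.faces, σ.card = D + 1) ∧
    ∀ σ : Finset V, Δ.IsFacet σ → σ.card = D + 1

/-- The graph (1-skeleton) of a complex. -/
def graph (Δ : SC V) : SimpleGraph V where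
  Adj u v := u ≠ v ∧ ({u, v} : Finset V) ∈ Δ.faces
  symm := by
    refine ⟨fun u v h => ?_⟩
    exact ⟨h.1.symm, by rw [Finset.pair_comm]; exact h.2⟩
  loopless := by refine ⟨fun u h => ?_⟩; exact h.1 rfl

/-- A complex is connected if its vertex set is nonempty and any two vertices are
joined by a path in its graph. -/
def Connected (Δ : SC V) : Prop :=
  Δ.vertexSet.Nonempty ∧ ∀ u ∈ Δ.vertexSet, ∀ v ∈ Δ.vertexSet, Δ.graph.Reachable u v

/-- The reduced Euler characteristic `χ̃(Δ) = -1 + f₀ - f₁ + f₂ - ⋯`. -/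
def redChar (Δ : SC V) : ℤ := -∑ σ ∈ Δ.faces, (-1 : ℤ) ^ σ.card

/-- `Δ` is an Eulerian complex of dimension `D`: it is pure of dimension `D` and the
reduced Euler characteristic of the link of every face `σ` (including `σ = ∅`)
equals `(-1) ^ (dim lk σ)`, written multiplicatively to avoid signed dimensions. -/
def IsEulerian (Δ : SC V) (D : ℕ) : Prop :=
  Δ.Pure D ∧ ∀ σ ∈ Δ.faces, (Δ.link σ).redChar * (-1) ^ σ.card = (-1) ^ D

/-- A weak pseudomanifold of dimension `D`: pure and every ridge ((D-1)-face) lies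
in exactly two facets. -/
def IsWeakPseudo (Δ : SC V) (D : ℕ) : Prop :=
  Δ.Pure D ∧ ∀ σ ∈ Δ.faces, σ.card = D →
    (Δ.faces.filter fun τ => σ ⊆ τ ∧ τ.card = D + 1).card = 2

/-- A normal pseudomanifold of dimension `D`: a connected weak pseudomanifold all of
whose links of faces of dimension `≤ D - 2` are connected. -/
def IsNormalPseudo (Δ : SC V) (D : ℕ) : Prop :=
  Δ.IsWeakPseudo D ∧ Δ.Connected ∧
    ∀ σ ∈ Δ.faces, σ.card + 1 ≤ D → (Δ.link σ).Connected

/-- The join of two complexes (on disjoint vertex sets). -/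
def join (Δ Γ : SC V) : SC V where
  faces := (Δ.faces ×ˢ Γ.faces).image fun p => p.1 ∪ p.2
  empty_mem := Finset.mem_image.2 ⟨(∅, ∅),
    Finset.mem_product.2 ⟨Δ.empty_mem, Γ.empty_mem⟩, Finset.union_empty ∅⟩
  down_closed := by
    intro σ τ hσ hτ
    rw [Finset.mem_image] at hσ ⊢
    obtain ⟨⟨a, b⟩, hab, rfl⟩ := hσ
    rw [Finset.mem_product] at hab
    refine ⟨(τ ∩ a, τ ∩ b), Finset.mem_product.2
      ⟨Δ.down_closed hab.1 Finset.inter_subset_right,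
       Γ.down_closed hab.2 Finset.inter_subset_right⟩, ?_⟩
    rw [← Finset.inter_union_distrib_left]
    exact Finset.inter_eq_left.2 hτ

/-- The trivial complex, whose only face is the empty face (identity for join). -/
def trivialSC : SC V where
  faces := {∅}
  empty_mem := Finset.mem_singleton_self ∅
  down_closed := by
    intro σ τ hσ hτ
    simp only [Finset.mem_singleton] at hσ ⊢
    subst hσ
    exact Finset.subset_empty.1 hτ

/-- The join of a finite family of complexes. -/
def bigJoin : {k : ℕ} → (Fin k → SC V) → SC V
  | 0, _ => trivialSC
  | _ + 1, C => (C 0).join (bigJoin fun i => C i.succ)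

/-- `Δ` is a cycle (circle) with `n` vertices: a connected, 1-dimensional complex
all of whose vertices have exactly two neighbours. -/
def IsCycle (Δ : SC V) (n : ℕ) : Prop :=
  Δ.vertexSet.card = n ∧ (∀ σ ∈ Δ.faces, σ.card ≤ 2) ∧
    (∀ v ∈ Δ.vertexSet, (Δ.link {v}).vertexSet.card = 2) ∧ Δ.Connected

/-- `Δ` is the boundary complex of the `d`-dimensional cross-polytope: its vertices
come in `d` antipodal pairs and the faces are exactly the sets containing at most
one vertex of each pair. -/
def IsCrossPolytopeBoundary (Δ : SC V) (d : ℕ) : Prop :=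
  ∃ x y : Fin d → V, Function.Injective x ∧ Function.Injective y ∧
    (∀ i j, x i ≠ y j) ∧
    ∀ σ : Finset V, σ ∈ Δ.faces ↔
      ((∀ v ∈ σ, ∃ i, v = x i ∨ v = y i) ∧ ∀ i, ¬(x i ∈ σ ∧ y i ∈ σ))

/-- `Δ` is a simplicial 2-sphere: a connected weak 2-pseudomanifold whose vertex
links are circles and whose reduced Euler characteristic is 1. -/
def IsSphere2 (Δ : SC V) : Prop :=
  Δ.Connected ∧ Δ.IsWeakPseudo 2 ∧
    (∀ v ∈ Δ.vertexSet, ∃ n, 3 ≤ n ∧ (Δ.link {v}).IsCycle n) ∧ Δ.redChar = 1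

/-- `Δ` is a (closed) simplicial 3-manifold: connected, pure of dimension 3, and the
link of every vertex is a simplicial 2-sphere. -/
def Is3Manifold (Δ : SC V) : Prop :=
  Δ.Connected ∧ Δ.Pure 3 ∧ ∀ v ∈ Δ.vertexSet, (Δ.link {v}).IsSphere2

/-- `Δ` is a disjoint union of cycles, each of length at least 4: it is
1-dimensional, 2-regular and its graph has no triangles. -/
def IsDisjointUnionOfCyclesGe4 (Δ : SC V) : Prop :=
  (∀ σ ∈ Δ.faces, σ.card ≤ 2) ∧
    (∀ v ∈ Δ.vertexSet, (Δ.link {v}).vertexSet.card = 2) ∧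
    ∀ u v w : V, ({u, v} : Finset V) ∈ Δ.faces → ({v, w} : Finset V) ∈ Δ.faces →
      ({u, w} : Finset V) ∈ Δ.faces → u = v ∨ v = w ∨ u = w

end SC
namespace SC

variable {V : Type*} [DecidableEq V]

lemma mem_vertexSet_iff {Δ : SC V} {v : V} :
    v ∈ Δ.vertexSet ↔ ∃ σ ∈ Δ.faces, v ∈ σ := by
  simp [vertexSet, Finset.mem_sup]

lemma face_subset {Δ : SC V} {σ : Finset V} (h : σ ∈ Δ.faces) : σ ⊆ Δ.vertexSet :=
  fun v hv => mem_vertexSet_iff.2 ⟨σ, h, hv⟩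

lemma singleton_mem {Δ : SC V} {v : V} (h : v ∈ Δ.vertexSet) : {v} ∈ Δ.faces := by
  obtain ⟨σ, hσ, hv⟩ := mem_vertexSet_iff.1 h
  exact Δ.down_closed hσ (Finset.singleton_subset_iff.2 hv)

lemma mem_join_iff {A B : SC V} {σ : Finset V} :
    σ ∈ (A.join B).faces ↔ ∃ a ∈ A.faces, ∃ b ∈ B.faces, σ = a ∪ b := by
  simp only [join, Finset.mem_image, Finset.mem_product, Prod.exists]
  constructor
  · rintro ⟨a, b, ⟨ha, hb⟩, rfl⟩; exact ⟨a, ha, b, hb, rfl⟩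
  · rintro ⟨a, ha, b, hb, rfl⟩; exact ⟨a, b, ⟨ha, hb⟩, rfl⟩

lemma join_mem {A B : SC V} {a b : Finset V} (ha : a ∈ A.faces) (hb : b ∈ B.faces) :
    a ∪ b ∈ (A.join B).faces :=
  mem_join_iff.2 ⟨a, ha, b, hb, rfl⟩

lemma join_vertexSet (A B : SC V) :
    (A.join B).vertexSet = A.vertexSet ∪ B.vertexSet := by
  ext v
  simp only [Finset.mem_union, mem_vertexSet_iff]
  constructor
  · rintro ⟨σ, hσ, hv⟩
    obtain ⟨a, ha, b, hb, rfl⟩ := mem_join_iff.1 hσ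
    rcases Finset.mem_union.1 hv with h | h
    · exact Or.inl ⟨a, ha, h⟩
    · exact Or.inr ⟨b, hb, h⟩
  · rintro (⟨σ, hσ, hv⟩ | ⟨σ, hσ, hv⟩)
    · exact ⟨σ ∪ ∅, join_mem hσ B.empty_mem, by simpa using hv⟩
    · exact ⟨∅ ∪ σ, join_mem A.empty_mem hσ, by simpa using hv⟩

lemma join_decomp {A B : SC V} (hAB : Disjoint A.vertexSet B.vertexSet) {σ : Finset V}
    (h : σ ∈ (A.join B).faces) :
    σ ∩ A.vertexSet ∈ A.faces ∧ σ ∩ B.vertexSet ∈ B.faces ∧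
      σ = σ ∩ A.vertexSet ∪ σ ∩ B.vertexSet := by
  obtain ⟨a, ha, b, hb, rfl⟩ := mem_join_iff.1 h
  have haV : a ⊆ A.vertexSet := face_subset ha
  have hbV : b ⊆ B.vertexSet := face_subset hb
  have h1 : (a ∪ b) ∩ A.vertexSet = a := by
    rw [Finset.union_inter_distrib_right, Finset.inter_eq_left.2 haV,
      Finset.disjoint_iff_inter_eq_empty.1 (hAB.symm.mono_left hbV), Finset.union_empty]
  have h2 : (a ∪ b) ∩ B.vertexSet = b := by
    rw [Finset.union_inter_distrib_right, Finset.inter_eq_left.2 hbV,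
      Finset.disjoint_iff_inter_eq_empty.1 (hAB.mono_left haV), Finset.empty_union]
  rw [h1, h2]
  exact ⟨ha, hb, rfl⟩

end SC
namespace SC

variable {V : Type*} [DecidableEq V] {L : SC V} {n : ℕ}

lemma mem_link_vertexSet_iff {v w : V} :
    w ∈ (L.link {v}).vertexSet ↔ w ≠ v ∧ ({v, w} : Finset V) ∈ L.faces := by
  constructor
  · intro h
    obtain ⟨τ, hτ, hw⟩ := mem_vertexSet_iff.1 h
    rcases Finset.mem_insert.1 hτ with rfl | hτ
    · simp at hw
    · rw [Finset.mem_filter] at hτ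
      obtain ⟨hτf, hdisj, hun⟩ := hτ
      have hwv : w ≠ v := by
        rintro rfl
        exact Finset.disjoint_left.1 hdisj hw (Finset.mem_singleton_self _)
      refine ⟨hwv, L.down_closed hun ?_⟩
      intro x hx
      rcases Finset.mem_insert.1 hx with rfl | hx
      · exact Finset.mem_union_right _ (Finset.mem_singleton_self _)
      · exact Finset.mem_union_left _ (by rwa [Finset.mem_singleton.1 hx])
  · rintro ⟨hwv, hf⟩
    refine mem_vertexSet_iff.2 ⟨{w}, ?_, Finset.mem_singleton_self _⟩
    refine Finset.mem_insert.2 (Or.inr ?_)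
    rw [Finset.mem_filter]
    have hsub : ({w} : Finset V) ⊆ {v, w} := by
      intro x hx
      rw [Finset.mem_singleton] at hx
      subst hx
      simp
    refine ⟨L.down_closed hf hsub, by simp [hwv, Ne.symm hwv], ?_⟩
    have h : ({w} : Finset V) ∪ {v} = {v, w} := by
      ext x; simp [or_comm]
    rw [h]; exact hf

lemma edges_through_eq (v : V) :
    L.faces.filter (fun e => v ∈ e ∧ e.card = 2)
      = ((L.link {v}).vertexSet).image (fun w => {v, w}) := by
  ext e
  simp only [Finset.mem_filter, Finset.mem_image]
  constructor
  · rintro ⟨hf, hv, hcard⟩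
    obtain ⟨a, b, hab, rfl⟩ := Finset.card_eq_two.1 hcard
    rcases Finset.mem_insert.1 hv with rfl | hb
    · exact ⟨b, mem_link_vertexSet_iff.2 ⟨hab.symm, hf⟩, rfl⟩
    · rw [Finset.mem_singleton] at hb
      subst hb
      exact ⟨a, mem_link_vertexSet_iff.2 ⟨hab, by rwa [Finset.pair_comm]⟩,
        (Finset.pair_comm a v).symm⟩
  · rintro ⟨w, hw, rfl⟩
    obtain ⟨hwv, hf⟩ := mem_link_vertexSet_iff.1 hw
    exact ⟨hf, Finset.mem_insert_self _ _, Finset.card_pair hwv.symm⟩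

lemma edges_through_card (hL : L.IsCycle n) {v : V} (hv : v ∈ L.vertexSet) :
    (L.faces.filter (fun e => v ∈ e ∧ e.card = 2)).card = 2 := by
  rw [edges_through_eq v, Finset.card_image_of_injOn, hL.2.2.1 v hv]
  intro w hw w' hw' h
  have hwv := (mem_link_vertexSet_iff.1 hw).1
  have h2 : ({v, w} : Finset V) = {v, w'} := h
  have : w ∈ ({v, w'} : Finset V) := by
    rw [← h2]; simp
  rcases Finset.mem_insert.1 this with rfl | h'
  · exact absurd rfl hwv
  · exact Finset.mem_singleton.1 h'

lemma exists_edge_superset (hL : L.IsCycle n) (hn : 1 ≤ n) {f : Finset V}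
    (hf : f ∈ L.faces) : ∃ e ∈ L.faces, f ⊆ e ∧ e.card = 2 := by
  have key : ∀ v ∈ L.vertexSet, ∃ e ∈ L.faces, v ∈ e ∧ e.card = 2 := by
    intro v hv
    have h2 := hL.2.2.1 v hv
    have hne : (L.link {v}).vertexSet.Nonempty := by
      rw [← Finset.card_pos, h2]; norm_num
    obtain ⟨w, hw⟩ := hne
    obtain ⟨hwv, hvw⟩ := mem_link_vertexSet_iff.1 hw
    exact ⟨{v, w}, hvw, Finset.mem_insert_self _ _, Finset.card_pair hwv.symm⟩
  by_cases h2 : f.card = 2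
  · exact ⟨f, hf, Finset.Subset.rfl, h2⟩
  have hle : f.card ≤ 1 := by
    have := hL.2.1 f hf; omega
  rcases f.eq_empty_or_nonempty with rfl | ⟨v, hv⟩
  · have : L.vertexSet.Nonempty := by
      rw [← Finset.card_pos, hL.1]; omega
    obtain ⟨v, hv⟩ := this
    obtain ⟨e, he, _, hc⟩ := key v hv
    exact ⟨e, he, Finset.empty_subset _, hc⟩
  · have hf1 : f = {v} := by
      have : 1 ≤ f.card := Finset.card_pos.2 ⟨v, hv⟩
      have hcard : f.card = 1 := le_antisymm hle this
      obtain ⟨a, ha⟩ := Finset.card_eq_one.1 hcard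
      subst ha
      rw [Finset.mem_singleton] at hv; rw [hv]
    subst hf1
    obtain ⟨e, he, hve, hc⟩ := key v (face_subset hf hv)
    exact ⟨e, he, Finset.singleton_subset_iff.2 hve, hc⟩

lemma nbrs_eq (hL : L.IsCycle n) {u v w : V} (huv : ({u, v} : Finset V) ∈ L.faces)
    (huw : ({u, w} : Finset V) ∈ L.faces) (hvu : v ≠ u) (hwu : w ≠ u) (hvw : v ≠ w) :
    (L.link {u}).vertexSet = {v, w} := by
  have hu : u ∈ L.vertexSet := face_subset huv (Finset.mem_insert_self _ _)
  refine (Finset.eq_of_subset_of_card_le ?_ ?_).symm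
  · intro x hx
    rcases Finset.mem_insert.1 hx with rfl | hx
    · exact mem_link_vertexSet_iff.2 ⟨hvu, huv⟩
    · rw [Finset.mem_singleton] at hx; subst hx
      exact mem_link_vertexSet_iff.2 ⟨hwu, huw⟩
  · rw [hL.2.2.1 u hu, Finset.card_pair hvw]

lemma triangle_free (hL : L.IsCycle n) (hn : 4 ≤ n) (u v w : V)
    (huv : ({u, v} : Finset V) ∈ L.faces) (hvw : ({v, w} : Finset V) ∈ L.faces)
    (huw : ({u, w} : Finset V) ∈ L.faces) : u = v ∨ v = w ∨ u = w := by
  by_contra hcon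
  push_neg at hcon
  obtain ⟨huv', hvw', huw'⟩ := hcon
  set S : Finset V := {u, v, w} with hS
  have closed : ∀ x y : V, L.graph.Adj x y → x ∈ S → y ∈ S := by
    intro x y hxy hx
    obtain ⟨hne, hface⟩ := hxy
    have hy : y ∈ (L.link {x}).vertexSet :=
      mem_link_vertexSet_iff.2 ⟨Ne.symm hne, hface⟩
    simp only [hS, Finset.mem_insert, Finset.mem_singleton] at hx
    rcases hx with rfl | rfl | rfl
    · rw [nbrs_eq hL huv huw (Ne.symm huv') (fun h => huw' h.symm) hvw'] at hy
      simp only [hS, Finset.mem_insert, Finset.mem_singleton]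
      rcases Finset.mem_insert.1 hy with rfl | hy
      · exact Or.inr (Or.inl rfl)
      · exact Or.inr (Or.inr (Finset.mem_singleton.1 hy))
    · rw [nbrs_eq hL (by rwa [Finset.pair_comm]) hvw huv' (fun h => hvw' h.symm) huw'] at hy
      simp only [hS, Finset.mem_insert, Finset.mem_singleton]
      rcases Finset.mem_insert.1 hy with rfl | hy
      · exact Or.inl rfl
      · exact Or.inr (Or.inr (Finset.mem_singleton.1 hy))
    · rw [nbrs_eq hL (by rwa [Finset.pair_comm]) (by rwa [Finset.pair_comm]) huw' hvw'
        huv'] at hy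
      simp only [hS, Finset.mem_insert, Finset.mem_singleton]
      rcases Finset.mem_insert.1 hy with rfl | hy
      · exact Or.inl rfl
      · exact Or.inr (Or.inl (Finset.mem_singleton.1 hy))
  have walkS : ∀ {a b : V}, L.graph.Walk a b → a ∈ S → b ∈ S := by
    intro a b p
    induction p with
    | nil => exact id
    | cons h _ ih => exact fun ha => ih (closed _ _ h ha)
  have hScard : S.card ≤ 3 := by
    refine le_trans (Finset.card_insert_le _ _) ?_
    have := Finset.card_insert_le v ({w} : Finset V)
    simp only [Finset.card_singleton] at this
    omega
  have hnsub : ¬ L.vertexSet ⊆ S := by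
    intro hsub
    have := Finset.card_le_card hsub
    rw [hL.1] at this
    omega
  obtain ⟨z, hz, hzS⟩ := Finset.not_subset.1 hnsub
  have hu : u ∈ L.vertexSet := face_subset huv (Finset.mem_insert_self _ _)
  obtain ⟨p⟩ := hL.2.2.2.2 u hu z hz
  exact hzS (walkS p (by simp [hS]))

lemma cycle_flag (hL : L.IsCycle n) (hn : 4 ≤ n) : L.IsFlag := by
  intro σ hσ
  have hc2 : σ.card ≤ 2 := by
    by_contra h
    push_neg at h
    obtain ⟨u, hu, v, hv, w, hw, huv, huw, hvw⟩ := Finset.two_lt_card.1 h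
    rcases triangle_free hL hn u v w (hσ u hu v hv) (hσ v hv w hw) (hσ u hu w hw) with
      h | h | h <;> [exact huv h; exact hvw h; exact huw h]
  rcases σ.eq_empty_or_nonempty with rfl | ⟨v, hv⟩
  · exact L.empty_mem
  have h1 : σ.card = 1 ∨ σ.card = 2 := by
    have : 1 ≤ σ.card := Finset.card_pos.2 ⟨v, hv⟩
    omega
  rcases h1 with h1 | h1
  · obtain ⟨a, rfl⟩ := Finset.card_eq_one.1 h1
    have := hσ a (Finset.mem_singleton_self a) a (Finset.mem_singleton_self a)
    simpa using this
  · obtain ⟨a, b, hab, rfl⟩ := Finset.card_eq_two.1 h1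
    exact hσ a (Finset.mem_insert_self _ _) b (by simp)

end SC
namespace SC

variable {V : Type*} [DecidableEq V]

lemma join_comm_mem {A B : SC V} {σ : Finset V} :
    σ ∈ (A.join B).faces ↔ σ ∈ (B.join A).faces := by
  rw [mem_join_iff, mem_join_iff]
  constructor
  · rintro ⟨a, ha, b, hb, rfl⟩; exact ⟨b, hb, a, ha, Finset.union_comm a b⟩
  · rintro ⟨b, hb, a, ha, rfl⟩; exact ⟨a, ha, b, hb, Finset.union_comm b a⟩

lemma face_in_left {A B : SC V} (hAB : Disjoint A.vertexSet B.vertexSet)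
    {σ : Finset V} (h : σ ∈ (A.join B).faces) (hσA : σ ⊆ A.vertexSet) :
    σ ∈ A.faces := by
  obtain ⟨h1, _, _⟩ := join_decomp hAB h
  rwa [Finset.inter_eq_left.2 hσA] at h1

lemma not_mem_join {A B : SC V} {x : V} {τ : Finset V} (h : τ ∈ (A.join B).faces)
    (hx : x ∈ τ) (hxA : x ∉ A.vertexSet) (hxB : x ∉ B.vertexSet) : False := by
  have := face_subset h hx
  rw [join_vertexSet, Finset.mem_union] at this
  tauto

lemma link_in_join {A B : SC V} (hA2 : ∀ σ ∈ A.faces, σ.card ≤ 2)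
    (hAB : Disjoint A.vertexSet B.vertexSet) {e : Finset V} (he2 : e.card = 2)
    (heV : e ⊆ A.vertexSet) {ρ : Finset V} (hρ : Disjoint ρ e)
    (hρe : ρ ∪ e ∈ (A.join B).faces) : ρ ∈ B.faces := by
  obtain ⟨ha, hb, heq⟩ := join_decomp hAB hρe
  have hea : e ⊆ (ρ ∪ e) ∩ A.vertexSet :=
    Finset.subset_inter Finset.subset_union_right heV
  have hae : (ρ ∪ e) ∩ A.vertexSet = e := by
    refine (Finset.eq_of_subset_of_card_le hea ?_).symm
    rw [he2]; exact hA2 _ ha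
  have hρb : ρ ⊆ (ρ ∪ e) ∩ B.vertexSet := by
    intro x hx
    have hxρe : x ∈ ρ ∪ e := Finset.mem_union_left _ hx
    rw [heq] at hxρe
    rcases Finset.mem_union.1 hxρe with h' | h'
    · rw [hae] at h'
      exact absurd h' (Finset.disjoint_left.1 hρ hx)
    · exact h'
  exact B.down_closed hb hρb

lemma join_face_ext {A B : SC V} {nA nB : ℕ} (hA : A.IsCycle nA) (hB : B.IsCycle nB)
    (hnA : 1 ≤ nA) (hnB : 1 ≤ nB) (hAB : Disjoint A.vertexSet B.vertexSet)
    {σ : Finset V} (h : σ ∈ (A.join B).faces) :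
    ∃ τ ∈ (A.join B).faces, σ ⊆ τ ∧ τ.card = 4 := by
  obtain ⟨a, ha, b, hb, rfl⟩ := mem_join_iff.1 h
  obtain ⟨ea, hea, haea, hea2⟩ := exists_edge_superset hA hnA ha
  obtain ⟨eb, heb, hbeb, heb2⟩ := exists_edge_superset hB hnB hb
  refine ⟨ea ∪ eb, join_mem hea heb, Finset.union_subset_union haea hbeb, ?_⟩
  rw [Finset.card_union_of_disjoint (hAB.mono (face_subset hea) (face_subset heb)),
    hea2, heb2]

lemma ridge_count {A B : SC V} {nB : ℕ} (hA2 : ∀ σ ∈ A.faces, σ.card ≤ 2)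
    (hB : B.IsCycle nB) (hAB : Disjoint A.vertexSet B.vertexSet)
    {e : Finset V} (he : e ∈ A.faces) (he2 : e.card = 2) {v : V} (hv : v ∈ B.vertexSet)
    (Δ : SC V)
    (hmem : ∀ τ, τ ∈ Δ.faces → (e ∪ {v}) ⊆ τ → τ.card = 4 → τ ∈ (A.join B).faces)
    (hmem' : ∀ τ, τ ∈ (A.join B).faces → τ ∈ Δ.faces) :
    (Δ.faces.filter fun τ => (e ∪ {v}) ⊆ τ ∧ τ.card = 4).card = 2 := by
  have heV : e ⊆ A.vertexSet := face_subset he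
  have key : Δ.faces.filter (fun τ => (e ∪ {v}) ⊆ τ ∧ τ.card = 4)
      = (B.faces.filter (fun b => v ∈ b ∧ b.card = 2)).image (fun b => e ∪ b) := by
    ext τ
    simp only [Finset.mem_filter, Finset.mem_image]
    constructor
    · rintro ⟨hτΔ, hsub, hc4⟩
      have hτ := hmem τ hτΔ hsub hc4
      obtain ⟨ha, hb, heq⟩ := join_decomp hAB hτ
      have hea : e ⊆ τ ∩ A.vertexSet :=
        Finset.subset_inter ((Finset.subset_union_left).trans hsub) heV
      have hae : τ ∩ A.vertexSet = e := by
        refine (Finset.eq_of_subset_of_card_le hea ?_).symm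
        rw [he2]; exact hA2 _ ha
      have hvτ : v ∈ τ := hsub (Finset.mem_union_right _ (Finset.mem_singleton_self v))
      have hvb : v ∈ τ ∩ B.vertexSet := Finset.mem_inter.2 ⟨hvτ, hv⟩
      have hdisj : Disjoint (τ ∩ A.vertexSet) (τ ∩ B.vertexSet) :=
        hAB.mono Finset.inter_subset_right Finset.inter_subset_right
      have hb2 : (τ ∩ B.vertexSet).card = 2 := by
        have := hc4
        rw [heq, Finset.card_union_of_disjoint hdisj, hae, he2] at this
        omega
      have hτeq : τ = e ∪ τ ∩ B.vertexSet := by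
        conv_lhs => rw [heq, hae]
      exact ⟨τ ∩ B.vertexSet, ⟨hb, hvb, hb2⟩, hτeq.symm⟩
    · rintro ⟨b, ⟨hbf, hvb, hb2⟩, rfl⟩
      have hbV : b ⊆ B.vertexSet := face_subset hbf
      refine ⟨hmem' _ (join_mem he hbf), ?_, ?_⟩
      · exact Finset.union_subset_union Finset.Subset.rfl
          (Finset.singleton_subset_iff.2 hvb)
      · rw [Finset.card_union_of_disjoint (hAB.mono heV hbV), he2, hb2]
  rw [key, Finset.card_image_of_injOn, edges_through_card hB hv]
  intro b hb b' hb' h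
  have hbV : b ⊆ B.vertexSet := face_subset (Finset.mem_filter.1 hb).1
  have hb'V : b' ⊆ B.vertexSet := face_subset (Finset.mem_filter.1 hb').1
  have h2 : (e ∪ b) = (e ∪ b') := h
  have key2 : ∀ c : Finset V, c ⊆ B.vertexSet → (e ∪ c) ∩ B.vertexSet = c := by
    intro c hc
    rw [Finset.union_inter_distrib_right, Finset.inter_eq_left.2 hc,
      Finset.disjoint_iff_inter_eq_empty.1 (hAB.mono_left heV), Finset.empty_union]
  rw [← key2 b hbV, ← key2 b' hb'V, h2]

end SC
namespace SC

variable {V : Type*} [DecidableEq V]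

lemma ridge_in_join {A B : SC V} {nA nB : ℕ} (hA : A.IsCycle nA) (hB : B.IsCycle nB)
    (hAB : Disjoint A.vertexSet B.vertexSet) (Δ : SC V) {σ : Finset V}
    (hσ : σ ∈ (A.join B).faces) (hσ3 : σ.card = 3)
    (hmem : ∀ τ, τ ∈ Δ.faces → σ ⊆ τ → τ.card = 4 → τ ∈ (A.join B).faces)
    (hmem' : ∀ τ, τ ∈ (A.join B).faces → τ ∈ Δ.faces) :
    (Δ.faces.filter fun τ => σ ⊆ τ ∧ τ.card = 4).card = 2 := by
  obtain ⟨ha, hb, heq⟩ := join_decomp hAB hσ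
  set a := σ ∩ A.vertexSet with ha_def
  set b := σ ∩ B.vertexSet with hb_def
  have hdisj : Disjoint a b :=
    hAB.mono Finset.inter_subset_right Finset.inter_subset_right
  have hcard : a.card + b.card = 3 := by
    rw [← Finset.card_union_of_disjoint hdisj, ← heq, hσ3]
  have ha2 := hA.2.1 a ha
  have hb2 := hB.2.1 b hb
  rcases (by omega : a.card = 2 ∧ b.card = 1 ∨ a.card = 1 ∧ b.card = 2) with
    ⟨ha2', hb1⟩ | ⟨ha1, hb2'⟩
  · obtain ⟨v, hveq⟩ := Finset.card_eq_one.1 hb1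
    have hv : v ∈ B.vertexSet := face_subset hb (hveq ▸ Finset.mem_singleton_self v)
    have hσeq : σ = a ∪ {v} := by rw [heq, hveq]
    rw [hσeq] at hmem ⊢
    exact ridge_count hA.2.1 hB hAB ha ha2' hv Δ hmem hmem'
  · obtain ⟨v, hveq⟩ := Finset.card_eq_one.1 ha1
    have hv : v ∈ A.vertexSet := face_subset ha (hveq ▸ Finset.mem_singleton_self v)
    have hσeq : σ = b ∪ {v} := by rw [heq, hveq, Finset.union_comm]
    rw [hσeq] at hmem ⊢
    refine ridge_count hB.2.1 hA hAB.symm hb hb2' hv Δ ?_ ?_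
    · intro τ h1 h2 h3; exact join_comm_mem.1 (hmem τ h1 h2 h3)
    · intro τ h; exact hmem' τ (join_comm_mem.1 h)

end SC
/-- For four cycles `L₁, L₂, L₃, L₄` of lengths `≥ 4` on pairwise
disjoint vertex sets, `Δ = (L₁*L₃) ∪ (L₂*L₃) ∪ (L₁*L₄)` is a flag weak
3-pseudomanifold with edges `τ₁ ∈ L₁`, `τ₂ ∈ L₃` such that
`V(lk τ₁) ∪ V(lk τ₂) = V(Δ)`, yet `Δ` is a proper subcomplex of `lk τ₁ * lk τ₂`. -/
theorem statement_16 {V : Type*} [DecidableEq V] (L₁ L₂ L₃ L₄ : SC V)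
    (n₁ n₂ n₃ n₄ : ℕ) (h₁ : 4 ≤ n₁) (h₂ : 4 ≤ n₂) (h₃ : 4 ≤ n₃) (h₄ : 4 ≤ n₄)
    (hc₁ : L₁.IsCycle n₁) (hc₂ : L₂.IsCycle n₂) (hc₃ : L₃.IsCycle n₃)
    (hc₄ : L₄.IsCycle n₄)
    (h12 : Disjoint L₁.vertexSet L₂.vertexSet) (h13 : Disjoint L₁.vertexSet L₃.vertexSet)
    (h14 : Disjoint L₁.vertexSet L₄.vertexSet) (h23 : Disjoint L₂.vertexSet L₃.vertexSet)
    (h24 : Disjoint L₂.vertexSet L₄.vertexSet) (h34 : Disjoint L₃.vertexSet L₄.vertexSet)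
    (Δ : SC V)
    (hΔ : ∀ σ : Finset V, σ ∈ Δ.faces ↔
      σ ∈ (L₁.join L₃).faces ∨ σ ∈ (L₂.join L₃).faces ∨ σ ∈ (L₁.join L₄).faces) :
    Δ.IsFlag ∧ Δ.IsWeakPseudo 3 ∧
    ∃ τ₁ ∈ L₁.faces, ∃ τ₂ ∈ L₃.faces, τ₁.card = 2 ∧ τ₂.card = 2 ∧
      (Δ.link τ₁).vertexSet ∪ (Δ.link τ₂).vertexSet = Δ.vertexSet ∧
      Δ.faces ⊂ ((Δ.link τ₁).join (Δ.link τ₂)).faces := by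
  open SC in
  -- disjointness accessors
  have n12 : ∀ {x}, x ∈ L₁.vertexSet → x ∉ L₂.vertexSet := fun h => Finset.disjoint_left.1 h12 h
  have n21 : ∀ {x}, x ∈ L₂.vertexSet → x ∉ L₁.vertexSet := fun h => Finset.disjoint_right.1 h12 h
  have n13 : ∀ {x}, x ∈ L₁.vertexSet → x ∉ L₃.vertexSet := fun h => Finset.disjoint_left.1 h13 h
  have n31 : ∀ {x}, x ∈ L₃.vertexSet → x ∉ L₁.vertexSet := fun h => Finset.disjoint_right.1 h13 h
  have n14 : ∀ {x}, x ∈ L₁.vertexSet → x ∉ L₄.vertexSet := fun h => Finset.disjoint_left.1 h14 h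
  have n41 : ∀ {x}, x ∈ L₄.vertexSet → x ∉ L₁.vertexSet := fun h => Finset.disjoint_right.1 h14 h
  have n23 : ∀ {x}, x ∈ L₂.vertexSet → x ∉ L₃.vertexSet := fun h => Finset.disjoint_left.1 h23 h
  have n32 : ∀ {x}, x ∈ L₃.vertexSet → x ∉ L₂.vertexSet := fun h => Finset.disjoint_right.1 h23 h
  have n24 : ∀ {x}, x ∈ L₂.vertexSet → x ∉ L₄.vertexSet := fun h => Finset.disjoint_left.1 h24 h
  have n42 : ∀ {x}, x ∈ L₄.vertexSet → x ∉ L₂.vertexSet := fun h => Finset.disjoint_right.1 h24 h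
  have n34 : ∀ {x}, x ∈ L₃.vertexSet → x ∉ L₄.vertexSet := fun h => Finset.disjoint_left.1 h34 h
  have n43 : ∀ {x}, x ∈ L₄.vertexSet → x ∉ L₃.vertexSet := fun h => Finset.disjoint_right.1 h34 h
  -- vertex set of Δ
  have hΔV : ∀ x, x ∈ Δ.vertexSet ↔ x ∈ L₁.vertexSet ∨ x ∈ L₂.vertexSet ∨
      x ∈ L₃.vertexSet ∨ x ∈ L₄.vertexSet := by
    intro x
    constructor
    · intro hx
      obtain ⟨σ, hσ, hxσ⟩ := mem_vertexSet_iff.1 hx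
      rcases (hΔ σ).1 hσ with h | h | h <;>
      · have := face_subset h hxσ
        rw [join_vertexSet, Finset.mem_union] at this
        tauto
    · intro hx
      have mk : ∀ (A B : SC V), x ∈ A.vertexSet → ({x} : Finset V) ∈ (A.join B).faces := by
        intro A B h
        have := join_mem (singleton_mem h) B.empty_mem
        rwa [Finset.union_empty] at this
      have mk' : ∀ (A B : SC V), x ∈ B.vertexSet → ({x} : Finset V) ∈ (A.join B).faces := by
        intro A B h
        have := join_mem A.empty_mem (singleton_mem h)
        rwa [Finset.empty_union] at this
      rcases hx with h | h | h | h
      · exact mem_vertexSet_iff.2 ⟨{x}, (hΔ _).2 (Or.inl (mk L₁ L₃ h)), Finset.mem_singleton_self x⟩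
      · exact mem_vertexSet_iff.2 ⟨{x}, (hΔ _).2 (Or.inr (Or.inl (mk L₂ L₃ h))), Finset.mem_singleton_self x⟩
      · exact mem_vertexSet_iff.2 ⟨{x}, (hΔ _).2 (Or.inl (mk' L₁ L₃ h)), Finset.mem_singleton_self x⟩
      · exact mem_vertexSet_iff.2 ⟨{x}, (hΔ _).2 (Or.inr (Or.inr (mk' L₁ L₄ h))), Finset.mem_singleton_self x⟩
  -- FLAGNESS
  have hflag : Δ.IsFlag := by
    intro σ hσ
    have hcov : ∀ v ∈ σ, v ∈ L₁.vertexSet ∨ v ∈ L₂.vertexSet ∨ v ∈ L₃.vertexSet ∨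
        v ∈ L₄.vertexSet := by
      intro v hv
      have h1 : ({v} : Finset V) ∈ Δ.faces := by
        have := hσ v hv v hv
        simpa using this
      exact (hΔV v).1 (mem_vertexSet_iff.2 ⟨{v}, h1, Finset.mem_singleton_self v⟩)
    have hs1 : σ ∩ L₁.vertexSet ∈ L₁.faces := by
      apply cycle_flag hc₁ h₁
      intro u hu v hv
      rw [Finset.mem_inter] at hu hv
      have hp := hσ u hu.1 v hv.1
      have hpsub : ({u, v} : Finset V) ⊆ L₁.vertexSet := by
        simp [Finset.insert_subset_iff, hu.2, hv.2]
      rcases (hΔ _).1 hp with h | h | h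
      · exact face_in_left h13 h hpsub
      · exact (not_mem_join h (Finset.mem_insert_self u {v}) (n12 hu.2) (n13 hu.2)).elim
      · exact face_in_left h14 h hpsub
    have hs2 : σ ∩ L₂.vertexSet ∈ L₂.faces := by
      apply cycle_flag hc₂ h₂
      intro u hu v hv
      rw [Finset.mem_inter] at hu hv
      have hp := hσ u hu.1 v hv.1
      have hpsub : ({u, v} : Finset V) ⊆ L₂.vertexSet := by
        simp [Finset.insert_subset_iff, hu.2, hv.2]
      rcases (hΔ _).1 hp with h | h | h
      · exact (not_mem_join h (Finset.mem_insert_self u {v}) (n21 hu.2) (n23 hu.2)).elim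
      · exact face_in_left h23 h hpsub
      · exact (not_mem_join h (Finset.mem_insert_self u {v}) (n21 hu.2) (n24 hu.2)).elim
    have hs3 : σ ∩ L₃.vertexSet ∈ L₃.faces := by
      apply cycle_flag hc₃ h₃
      intro u hu v hv
      rw [Finset.mem_inter] at hu hv
      have hp := hσ u hu.1 v hv.1
      have hpsub : ({u, v} : Finset V) ⊆ L₃.vertexSet := by
        simp [Finset.insert_subset_iff, hu.2, hv.2]
      rcases (hΔ _).1 hp with h | h | h
      · exact face_in_left h13.symm (join_comm_mem.1 h) hpsub
      · exact face_in_left h23.symm (join_comm_mem.1 h) hpsub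
      · exact (not_mem_join h (Finset.mem_insert_self u {v}) (n31 hu.2) (n34 hu.2)).elim
    have hs4 : σ ∩ L₄.vertexSet ∈ L₄.faces := by
      apply cycle_flag hc₄ h₄
      intro u hu v hv
      rw [Finset.mem_inter] at hu hv
      have hp := hσ u hu.1 v hv.1
      have hpsub : ({u, v} : Finset V) ⊆ L₄.vertexSet := by
        simp [Finset.insert_subset_iff, hu.2, hv.2]
      rcases (hΔ _).1 hp with h | h | h
      · exact (not_mem_join h (Finset.mem_insert_self u {v}) (n41 hu.2) (n43 hu.2)).elim
      · exact (not_mem_join h (Finset.mem_insert_self u {v}) (n42 hu.2) (n43 hu.2)).elim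
      · exact face_in_left h14.symm (join_comm_mem.1 h) hpsub
    -- exclusion claims
    have hx24 : σ ∩ L₂.vertexSet = ∅ ∨ σ ∩ L₄.vertexSet = ∅ := by
      by_contra hcon
      push_neg at hcon
      obtain ⟨u, hu⟩ := hcon.1
      obtain ⟨w, hw⟩ := hcon.2
      rw [Finset.mem_inter] at hu hw
      have hp := hσ u hu.1 w hw.1
      rcases (hΔ _).1 hp with h | h | h
      · exact not_mem_join h (Finset.mem_insert_self u {w}) (n21 hu.2) (n23 hu.2)
      · exact not_mem_join h (by simp) (n42 hw.2) (n43 hw.2)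
      · exact not_mem_join h (Finset.mem_insert_self u {w}) (n21 hu.2) (n24 hu.2)
    have hx12 : σ ∩ L₁.vertexSet = ∅ ∨ σ ∩ L₂.vertexSet = ∅ := by
      by_contra hcon
      push_neg at hcon
      obtain ⟨u, hu⟩ := hcon.1
      obtain ⟨w, hw⟩ := hcon.2
      rw [Finset.mem_inter] at hu hw
      have hp := hσ u hu.1 w hw.1
      rcases (hΔ _).1 hp with h | h | h
      · exact not_mem_join h (by simp) (n21 hw.2) (n23 hw.2)
      · exact not_mem_join h (Finset.mem_insert_self u {w}) (n12 hu.2) (n13 hu.2)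
      · exact not_mem_join h (by simp) (n21 hw.2) (n24 hw.2)
    have hx34 : σ ∩ L₃.vertexSet = ∅ ∨ σ ∩ L₄.vertexSet = ∅ := by
      by_contra hcon
      push_neg at hcon
      obtain ⟨u, hu⟩ := hcon.1
      obtain ⟨w, hw⟩ := hcon.2
      rw [Finset.mem_inter] at hu hw
      have hp := hσ u hu.1 w hw.1
      rcases (hΔ _).1 hp with h | h | h
      · exact not_mem_join h (by simp) (n41 hw.2) (n43 hw.2)
      · exact not_mem_join h (by simp) (n42 hw.2) (n43 hw.2)
      · exact not_mem_join h (Finset.mem_insert_self u {w}) (n31 hu.2) (n34 hu.2)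
    have split : ∀ (W W' : Finset V) (Z Z' : Finset V), σ ∩ Z = ∅ → σ ∩ Z' = ∅ →
        (∀ x ∈ σ, x ∈ W ∨ x ∈ Z ∨ x ∈ W' ∨ x ∈ Z') → σ = σ ∩ W ∪ σ ∩ W' := by
      intro W W' Z Z' hZ hZ' hcov'
      ext x
      simp only [Finset.mem_union, Finset.mem_inter]
      constructor
      · intro hx
        rcases hcov' x hx with h | h | h | h
        · exact Or.inl ⟨hx, h⟩
        · exact absurd (Finset.mem_inter.2 ⟨hx, h⟩) (by rw [hZ]; simp)
        · exact Or.inr ⟨hx, h⟩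
        · exact absurd (Finset.mem_inter.2 ⟨hx, h⟩) (by rw [hZ']; simp)
      · rintro (⟨h, _⟩ | ⟨h, _⟩) <;> exact h
    rcases hx24 with h2e | h4e
    · rcases hx34 with h3e | h4e
      · -- σ = s1 ∪ s4 ∈ L₁ * L₄
        have hσeq : σ = σ ∩ L₁.vertexSet ∪ σ ∩ L₄.vertexSet := by
          apply split _ _ (L₂.vertexSet) (L₃.vertexSet) h2e h3e
          intro x hx
          have := hcov x hx
          tauto
        refine (hΔ σ).2 (Or.inr (Or.inr ?_))
        rw [hσeq]
        exact join_mem hs1 hs4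
      · have hσeq : σ = σ ∩ L₁.vertexSet ∪ σ ∩ L₃.vertexSet := by
          apply split _ _ (L₂.vertexSet) (L₄.vertexSet) h2e h4e
          intro x hx
          have := hcov x hx
          tauto
        refine (hΔ σ).2 (Or.inl ?_)
        rw [hσeq]
        exact join_mem hs1 hs3
    · rcases hx12 with h1e | h2e
      · have hσeq : σ = σ ∩ L₂.vertexSet ∪ σ ∩ L₃.vertexSet := by
          apply split _ _ (L₁.vertexSet) (L₄.vertexSet) h1e h4e
          intro x hx
          have := hcov x hx
          tauto
        refine (hΔ σ).2 (Or.inr (Or.inl ?_))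
        rw [hσeq]
        exact join_mem hs2 hs3
      · have hσeq : σ = σ ∩ L₁.vertexSet ∪ σ ∩ L₃.vertexSet := by
          apply split _ _ (L₂.vertexSet) (L₄.vertexSet) h2e h4e
          intro x hx
          have := hcov x hx
          tauto
        refine (hΔ σ).2 (Or.inl ?_)
        rw [hσeq]
        exact join_mem hs1 hs3
  -- extension of faces to 4-faces
  have hext : ∀ σ ∈ Δ.faces, ∃ τ ∈ Δ.faces, σ ⊆ τ ∧ τ.card = 4 := by
    intro σ hσ
    rcases (hΔ σ).1 hσ with h | h | h
    · obtain ⟨τ, hτ, hsub, hc⟩ := join_face_ext hc₁ hc₃ (by omega) (by omega) h13 h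
      exact ⟨τ, (hΔ τ).2 (Or.inl hτ), hsub, hc⟩
    · obtain ⟨τ, hτ, hsub, hc⟩ := join_face_ext hc₂ hc₃ (by omega) (by omega) h23 h
      exact ⟨τ, (hΔ τ).2 (Or.inr (Or.inl hτ)), hsub, hc⟩
    · obtain ⟨τ, hτ, hsub, hc⟩ := join_face_ext hc₁ hc₄ (by omega) (by omega) h14 h
      exact ⟨τ, (hΔ τ).2 (Or.inr (Or.inr hτ)), hsub, hc⟩
  have hpure : Δ.Pure 3 := by
    refine ⟨?_, ?_, ?_⟩
    · intro σ hσ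
      rcases (hΔ σ).1 hσ with h | h | h
      · obtain ⟨a, ha, b, hb, rfl⟩ := mem_join_iff.1 h
        have := Finset.card_union_le a b
        have h1 := hc₁.2.1 a ha
        have h2 := hc₃.2.1 b hb
        omega
      · obtain ⟨a, ha, b, hb, rfl⟩ := mem_join_iff.1 h
        have := Finset.card_union_le a b
        have h1 := hc₂.2.1 a ha
        have h2 := hc₃.2.1 b hb
        omega
      · obtain ⟨a, ha, b, hb, rfl⟩ := mem_join_iff.1 h
        have := Finset.card_union_le a b
        have h1 := hc₁.2.1 a ha
        have h2 := hc₄.2.1 b hb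
        omega
    · obtain ⟨τ, hτ, _, hc⟩ := hext ∅ Δ.empty_mem
      exact ⟨τ, hτ, hc⟩
    · intro σ hfacet
      obtain ⟨τ, hτ, hsub, hc⟩ := hext σ hfacet.1
      rw [hfacet.2 τ hτ hsub]
      exact hc
  have hwp : Δ.IsWeakPseudo 3 := by
    refine ⟨hpure, ?_⟩
    intro σ hσf hσ3
    show (Δ.faces.filter fun τ => σ ⊆ τ ∧ τ.card = 4).card = 2
    rcases (hΔ σ).1 hσf with h | h | h
    · obtain ⟨ha, hb, heq⟩ := join_decomp h13 h
      have hcard : (σ ∩ L₁.vertexSet).card + (σ ∩ L₃.vertexSet).card = 3 := by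
        rw [← Finset.card_union_of_disjoint
          (h13.mono Finset.inter_subset_right Finset.inter_subset_right), ← heq, hσ3]
      have ha2 := hc₁.2.1 _ ha
      have hb2 := hc₃.2.1 _ hb
      obtain ⟨x1, hx1⟩ := Finset.card_pos.1 (by omega : 0 < (σ ∩ L₁.vertexSet).card)
      obtain ⟨x3, hx3⟩ := Finset.card_pos.1 (by omega : 0 < (σ ∩ L₃.vertexSet).card)
      rw [Finset.mem_inter] at hx1 hx3
      refine ridge_in_join hc₁ hc₃ h13 Δ h hσ3 ?_ (fun τ ht => (hΔ τ).2 (Or.inl ht))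
      intro τ hτΔ hsub hτ4
      rcases (hΔ τ).1 hτΔ with h' | h' | h'
      · exact h'
      · exact (not_mem_join h' (hsub hx1.1) (n12 hx1.2) (n13 hx1.2)).elim
      · exact (not_mem_join h' (hsub hx3.1) (n31 hx3.2) (n34 hx3.2)).elim
    · obtain ⟨ha, hb, heq⟩ := join_decomp h23 h
      have hcard : (σ ∩ L₂.vertexSet).card + (σ ∩ L₃.vertexSet).card = 3 := by
        rw [← Finset.card_union_of_disjoint
          (h23.mono Finset.inter_subset_right Finset.inter_subset_right), ← heq, hσ3]
      have ha2 := hc₂.2.1 _ ha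
      have hb2 := hc₃.2.1 _ hb
      obtain ⟨x2, hx2⟩ := Finset.card_pos.1 (by omega : 0 < (σ ∩ L₂.vertexSet).card)
      obtain ⟨x3, hx3⟩ := Finset.card_pos.1 (by omega : 0 < (σ ∩ L₃.vertexSet).card)
      rw [Finset.mem_inter] at hx2 hx3
      refine ridge_in_join hc₂ hc₃ h23 Δ h hσ3 ?_
        (fun τ ht => (hΔ τ).2 (Or.inr (Or.inl ht)))
      intro τ hτΔ hsub hτ4
      rcases (hΔ τ).1 hτΔ with h' | h' | h'
      · exact (not_mem_join h' (hsub hx2.1) (n21 hx2.2) (n23 hx2.2)).elim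
      · exact h'
      · exact (not_mem_join h' (hsub hx3.1) (n31 hx3.2) (n34 hx3.2)).elim
    · obtain ⟨ha, hb, heq⟩ := join_decomp h14 h
      have hcard : (σ ∩ L₁.vertexSet).card + (σ ∩ L₄.vertexSet).card = 3 := by
        rw [← Finset.card_union_of_disjoint
          (h14.mono Finset.inter_subset_right Finset.inter_subset_right), ← heq, hσ3]
      have ha2 := hc₁.2.1 _ ha
      have hb2 := hc₄.2.1 _ hb
      obtain ⟨x1, hx1⟩ := Finset.card_pos.1 (by omega : 0 < (σ ∩ L₁.vertexSet).card)
      obtain ⟨x4, hx4⟩ := Finset.card_pos.1 (by omega : 0 < (σ ∩ L₄.vertexSet).card)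
      rw [Finset.mem_inter] at hx1 hx4
      refine ridge_in_join hc₁ hc₄ h14 Δ h hσ3 ?_
        (fun τ ht => (hΔ τ).2 (Or.inr (Or.inr ht)))
      intro τ hτΔ hsub hτ4
      rcases (hΔ τ).1 hτΔ with h' | h' | h'
      · exact (not_mem_join h' (hsub hx4.1) (n41 hx4.2) (n43 hx4.2)).elim
      · exact (not_mem_join h' (hsub hx1.1) (n12 hx1.2) (n13 hx1.2)).elim
      · exact h'
  -- the two edges
  obtain ⟨τ₁, hτ₁f, -, hτ₁2⟩ := exists_edge_superset hc₁ (by omega) L₁.empty_mem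
  obtain ⟨τ₂, hτ₂f, -, hτ₂2⟩ := exists_edge_superset hc₃ (by omega) L₃.empty_mem
  have hτ₁V : τ₁ ⊆ L₁.vertexSet := face_subset hτ₁f
  have hτ₂V : τ₂ ⊆ L₃.vertexSet := face_subset hτ₂f
  obtain ⟨x₁, hx₁⟩ : τ₁.Nonempty := Finset.card_pos.1 (by rw [hτ₁2]; norm_num)
  obtain ⟨x₃, hx₃⟩ : τ₂.Nonempty := Finset.card_pos.1 (by rw [hτ₂2]; norm_num)
  -- link characterizations
  have hlink1 : (Δ.link τ₁).faces = L₃.faces ∪ L₄.faces := by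
    ext ρ
    simp only [link, Finset.mem_insert, Finset.mem_filter, Finset.mem_union]
    constructor
    · rintro (rfl | ⟨hρΔ, hdisj, hun⟩)
      · exact Or.inl L₃.empty_mem
      · rcases (hΔ _).1 hun with h | h | h
        · exact Or.inl (link_in_join hc₁.2.1 h13 hτ₁2 hτ₁V hdisj h)
        · exact (not_mem_join h (Finset.mem_union_right ρ hx₁)
            (n12 (hτ₁V hx₁)) (n13 (hτ₁V hx₁))).elim
        · exact Or.inr (link_in_join hc₁.2.1 h14 hτ₁2 hτ₁V hdisj h)
    · rintro (hρ | hρ)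
      · refine Or.inr ⟨(hΔ ρ).2 (Or.inl ?_), ?_, ?_⟩
        · have := join_mem L₁.empty_mem hρ
          rwa [Finset.empty_union] at this
        · exact h13.symm.mono (face_subset hρ) hτ₁V
        · refine (hΔ _).2 (Or.inl ?_)
          have := join_mem hτ₁f hρ
          rwa [Finset.union_comm] at this
      · refine Or.inr ⟨(hΔ ρ).2 (Or.inr (Or.inr ?_)), ?_, ?_⟩
        · have := join_mem L₁.empty_mem hρ
          rwa [Finset.empty_union] at this
        · exact h14.symm.mono (face_subset hρ) hτ₁V
        · refine (hΔ _).2 (Or.inr (Or.inr ?_))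
          have := join_mem hτ₁f hρ
          rwa [Finset.union_comm] at this
  have hlink2 : (Δ.link τ₂).faces = L₁.faces ∪ L₂.faces := by
    ext ρ
    simp only [link, Finset.mem_insert, Finset.mem_filter, Finset.mem_union]
    constructor
    · rintro (rfl | ⟨hρΔ, hdisj, hun⟩)
      · exact Or.inl L₁.empty_mem
      · rcases (hΔ _).1 hun with h | h | h
        · exact Or.inl (link_in_join hc₃.2.1 h13.symm hτ₂2 hτ₂V hdisj (join_comm_mem.1 h))
        · exact Or.inr (link_in_join hc₃.2.1 h23.symm hτ₂2 hτ₂V hdisj (join_comm_mem.1 h))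
        · exact (not_mem_join h (Finset.mem_union_right ρ hx₃)
            (n31 (hτ₂V hx₃)) (n34 (hτ₂V hx₃))).elim
    · rintro (hρ | hρ)
      · refine Or.inr ⟨(hΔ ρ).2 (Or.inl ?_), ?_, ?_⟩
        · have := join_mem hρ L₃.empty_mem
          rwa [Finset.union_empty] at this
        · exact h13.mono (face_subset hρ) hτ₂V
        · exact (hΔ _).2 (Or.inl (join_mem hρ hτ₂f))
      · refine Or.inr ⟨(hΔ ρ).2 (Or.inr (Or.inl ?_)), ?_, ?_⟩
        · have := join_mem hρ L₃.empty_mem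
          rwa [Finset.union_empty] at this
        · exact h23.mono (face_subset hρ) hτ₂V
        · exact (hΔ _).2 (Or.inr (Or.inl (join_mem hρ hτ₂f)))
  have hlv1 : (Δ.link τ₁).vertexSet = L₃.vertexSet ∪ L₄.vertexSet := by
    rw [vertexSet, hlink1, Finset.sup_union, Finset.sup_eq_union]
    rfl
  have hlv2 : (Δ.link τ₂).vertexSet = L₁.vertexSet ∪ L₂.vertexSet := by
    rw [vertexSet, hlink2, Finset.sup_union, Finset.sup_eq_union]
    rfl
  refine ⟨hflag, hwp, τ₁, hτ₁f, τ₂, hτ₂f, hτ₁2, hτ₂2, ?_, ?_⟩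
  · ext x
    rw [hlv1, hlv2]
    simp only [Finset.mem_union, hΔV x]
    tauto
  · have hsub : Δ.faces ⊆ ((Δ.link τ₁).join (Δ.link τ₂)).faces := by
      intro f hf
      rcases (hΔ f).1 hf with h | h | h
      · obtain ⟨a, ha, b, hb, rfl⟩ := mem_join_iff.1 h
        exact mem_join_iff.2 ⟨b, by rw [hlink1]; exact Finset.mem_union_left _ hb,
          a, by rw [hlink2]; exact Finset.mem_union_left _ ha, Finset.union_comm a b⟩
      · obtain ⟨a, ha, b, hb, rfl⟩ := mem_join_iff.1 h
        exact mem_join_iff.2 ⟨b, by rw [hlink1]; exact Finset.mem_union_left _ hb,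
          a, by rw [hlink2]; exact Finset.mem_union_right _ ha, Finset.union_comm a b⟩
      · obtain ⟨a, ha, b, hb, rfl⟩ := mem_join_iff.1 h
        exact mem_join_iff.2 ⟨b, by rw [hlink1]; exact Finset.mem_union_right _ hb,
          a, by rw [hlink2]; exact Finset.mem_union_left _ ha, Finset.union_comm a b⟩
    obtain ⟨v₂, hv₂⟩ : L₂.vertexSet.Nonempty := Finset.card_pos.1 (by rw [hc₂.1]; omega)
    obtain ⟨v₄, hv₄⟩ : L₄.vertexSet.Nonempty := Finset.card_pos.1 (by rw [hc₄.1]; omega)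
    have hgjoin : ({v₄} : Finset V) ∪ {v₂} ∈ ((Δ.link τ₁).join (Δ.link τ₂)).faces :=
      mem_join_iff.2 ⟨{v₄}, by rw [hlink1]; exact Finset.mem_union_right _ (singleton_mem hv₄),
        {v₂}, by rw [hlink2]; exact Finset.mem_union_right _ (singleton_mem hv₂), rfl⟩
    have hgnot : ({v₄} : Finset V) ∪ {v₂} ∉ Δ.faces := by
      intro hcontr
      rcases (hΔ _).1 hcontr with h | h | h
      · exact not_mem_join h (Finset.mem_union_right _ (Finset.mem_singleton_self v₂))
          (n21 hv₂) (n23 hv₂)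
      · exact not_mem_join h (Finset.mem_union_left _ (Finset.mem_singleton_self v₄))
          (n42 hv₄) (n43 hv₄)
      · exact not_mem_join h (Finset.mem_union_right _ (Finset.mem_singleton_self v₂))
          (n21 hv₂) (n24 hv₂)
    exact (Finset.ssubset_iff_of_subset hsub).2 ⟨_, hgjoin, hgnot⟩
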